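/- Let 𝒳 and 𝒴 be nonempty finite sets. Let p_test be a probability distribution on 𝒳 with p_test(x) > 0 for every x, let V be a finite index set, and for each v ∈ V let p_gen_v be a probability distribution on 𝒳 (the generalization distribution for view v), φ_v : 𝒳 × 𝒴 → ℝ^{d_v} a feature map, θ_v ∈ ℝ^{d_v} a parameter vector, and c_v ∈ ℝ^{d_v} a target moment vector. Define the conditional distribution P̂(y|x) = exp(∑_{v∈V} (p_gen_v(x)/p_test(x)) θ_v·φ_v(x,y)) / ∑_{y'∈𝒴} exp(∑_{v∈V} (p_gen_v(x)/p_test(x)) θ_v·φ_v(x,y')). If P̂ satisfies the moment constraints ∑_{x∈𝒳} p_gen_v(x) ∑_{y∈𝒴} P̂(y|x) φ_v(x,y) = c_v for every v ∈ V, then for every conditional label distribution Q satisfying the same constraints ∑_{x∈𝒳} p_gen_v(x) ∑_{y∈𝒴} Q(y|x) φ_v(x,y) = c_v for every v ∈ V, the expected testing conditional entropy satisfies ∑_{x} p_test(x) ∑_{y} Q(y|x)(−log Q(y|x)) ≤ ∑_{x} p_test(x) ∑_{y} P̂(y|x)(−log P̂(y|x)). That is, the generalized robust covariate shift classifier (the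 maximizer of expected testing conditional entropy subject to generalized moment constraints) has the parametric form P̂_θ(y|x) ∝ exp(∑_v (p_gen_v(x)/p_test(x)) θ_v·φ_v(x,y)). -/

import Mathlib

open Finset

/-- Theorem 1 of the paper: the generalized robust covariate
shift classifier — the maximizer of expected testing conditional entropy
subject to generalized view-based moment constraints — has the parametric form
`P̂(y|x) ∝ exp(∑_v (p_gen_v(x)/p_test(x)) θ_v·φ_v(x,y))`: any conditional
label distribution `Q` satisfying the same moment constraints has expected
testing conditional entropy at most that of `P̂`. -/
theorem generalized_robust_covariate_shift_parametric_form
    {X Y V : Type*} [Fintype X] [Fintype Y] [Fintype V]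
    [Nonempty X] [Nonempty Y]
    (ptest : X → ℝ) (htest_pos : ∀ x, 0 < ptest x) (htest_sum : ∑ x, ptest x = 1)
    (d : V → ℕ)
    (pgen : V → X → ℝ)
    (hgen_nonneg : ∀ v x, 0 ≤ pgen v x) (hgen_sum : ∀ v, ∑ x, pgen v x = 1)
    (φ : (v : V) → X → Y → Fin (d v) → ℝ)
    (θ : (v : V) → Fin (d v) → ℝ)
    (c : (v : V) → Fin (d v) → ℝ)
    -- the parametric-form predictor
    (Phat : X → Y → ℝ)
    (hPhat : ∀ x y, Phat x y =
      Real.exp (∑ v, (pgen v x / ptest x) * ∑ i, θ v i * φ v x y i) /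
        ∑ y', Real.exp (∑ v, (pgen v x / ptest x) * ∑ i, θ v i * φ v x y' i))
    -- P̂ satisfies the generalized moment constraints
    (hPhat_constraints : ∀ (v : V) (i : Fin (d v)),
      ∑ x, pgen v x * ∑ y, Phat x y * φ v x y i = c v i)
    -- an arbitrary conditional label distribution satisfying the same constraints
    (Q : X → Y → ℝ)
    (hQ_nonneg : ∀ x y, 0 ≤ Q x y) (hQ_sum : ∀ x, ∑ y, Q x y = 1)
    (hQ_constraints : ∀ (v : V) (i : Fin (d v)),
      ∑ x, pgen v x * ∑ y, Q x y * φ v x y i = c v i) :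
    ∑ x, ptest x * ∑ y, Q x y * (-Real.log (Q x y)) ≤
      ∑ x, ptest x * ∑ y, Phat x y * (-Real.log (Phat x y)) := by
    classical
  set f : X → Y → ℝ := fun x y => ∑ v, (pgen v x / ptest x) * ∑ i, θ v i * φ v x y i with hf
  set Z : X → ℝ := fun x => ∑ y', Real.exp (f x y') with hZdef
  have hZpos : ∀ x, 0 < Z x := fun x =>
    Finset.sum_pos (fun y _ => Real.exp_pos _) Finset.univ_nonempty
  have hPhat' : ∀ x y, Phat x y = Real.exp (f x y) / Z x := hPhat
  have hPpos : ∀ x y, 0 < Phat x y := by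
    intro x y; rw [hPhat']; exact div_pos (Real.exp_pos _) (hZpos x)
  have hPsum : ∀ x, ∑ y, Phat x y = 1 := by
    intro x
    have h1 : ∑ y, Phat x y = (∑ y, Real.exp (f x y)) / Z x := by
      rw [Finset.sum_div]; exact Finset.sum_congr rfl fun y _ => hPhat' x y
    rw [h1]; exact div_self (ne_of_gt (hZpos x))
  have hlogP : ∀ x y, Real.log (Phat x y) = f x y - Real.log (Z x) := by
    intro x y
    rw [hPhat' x y, Real.log_div (Real.exp_ne_zero _) (ne_of_gt (hZpos x)), Real.log_exp]
  -- cross-entropy identity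
  have hcross : ∀ (R : X → Y → ℝ), (∀ x, ∑ y, R x y = 1) →
      ∑ x, ptest x * ∑ y, R x y * Real.log (Phat x y)
        = (∑ v, ∑ i, θ v i * ∑ x, pgen v x * ∑ y, R x y * φ v x y i)
          - ∑ x, ptest x * Real.log (Z x) := by
    intro R hR
    have hx : ∀ x, ptest x * ∑ y, R x y * Real.log (Phat x y)
        = (∑ v, ∑ i, θ v i * (pgen v x * ∑ y, R x y * φ v x y i))
          - ptest x * Real.log (Z x) := by
      intro x
      have e1 : ∑ y, R x y * Real.log (Phat x y)
          = (∑ y, R x y * f x y) - Real.log (Z x) := by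
        rw [show (∑ y, R x y * Real.log (Phat x y))
            = ∑ y, (R x y * f x y - R x y * Real.log (Z x)) from
          Finset.sum_congr rfl fun y _ => by rw [hlogP]; ring]
        rw [Finset.sum_sub_distrib, ← Finset.sum_mul, hR x, one_mul]
      rw [e1, mul_sub]
      congr 1
      have e2 : ∀ y, ptest x * (R x y * f x y)
          = ∑ v, ∑ i, θ v i * (pgen v x * (R x y * φ v x y i)) := by
        intro y
        have hp : ptest x ≠ 0 := (htest_pos x).ne'
        simp only [hf, Finset.mul_sum]
        refine Finset.sum_congr rfl fun v _ => ?_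
        refine Finset.sum_congr rfl fun i _ => ?_
        field_simp
      calc ptest x * ∑ y, R x y * f x y
          = ∑ y, ptest x * (R x y * f x y) := by rw [Finset.mul_sum]
        _ = ∑ y, ∑ v, ∑ i, θ v i * (pgen v x * (R x y * φ v x y i)) :=
            Finset.sum_congr rfl fun y _ => e2 y
        _ = ∑ v, ∑ y, ∑ i, θ v i * (pgen v x * (R x y * φ v x y i)) := by rw [Finset.sum_comm]
        _ = ∑ v, ∑ i, ∑ y, θ v i * (pgen v x * (R x y * φ v x y i)) :=
            Finset.sum_congr rfl fun v _ => by rw [Finset.sum_comm]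
        _ = ∑ v, ∑ i, θ v i * (pgen v x * ∑ y, R x y * φ v x y i) := by
            refine Finset.sum_congr rfl fun v _ => Finset.sum_congr rfl fun i _ => ?_
            rw [Finset.mul_sum, Finset.mul_sum]
    calc ∑ x, ptest x * ∑ y, R x y * Real.log (Phat x y)
        = ∑ x, ((∑ v, ∑ i, θ v i * (pgen v x * ∑ y, R x y * φ v x y i))
            - ptest x * Real.log (Z x)) := Finset.sum_congr rfl fun x _ => hx x
      _ = (∑ x, ∑ v, ∑ i, θ v i * (pgen v x * ∑ y, R x y * φ v x y i))
            - ∑ x, ptest x * Real.log (Z x) := Finset.sum_sub_distrib _ _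
      _ = (∑ v, ∑ i, θ v i * ∑ x, pgen v x * ∑ y, R x y * φ v x y i)
            - ∑ x, ptest x * Real.log (Z x) := by
          congr 1
          rw [Finset.sum_comm]
          refine Finset.sum_congr rfl fun v _ => ?_
          rw [Finset.sum_comm]
          refine Finset.sum_congr rfl fun i _ => ?_
          rw [Finset.mul_sum]
  have hcrossEq : ∑ x, ptest x * ∑ y, Q x y * Real.log (Phat x y)
      = ∑ x, ptest x * ∑ y, Phat x y * Real.log (Phat x y) := by
    rw [hcross Q hQ_sum, hcross Phat hPsum]
    congr 1
    refine Finset.sum_congr rfl fun v _ => Finset.sum_congr rfl fun i _ => ?_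
    rw [show (∑ x, pgen v x * ∑ y, Q x y * φ v x y i) = c v i from hQ_constraints v i,
        show (∑ x, pgen v x * ∑ y, Phat x y * φ v x y i) = c v i from hPhat_constraints v i]
  -- Gibbs inequality pointwise in x
  have gibbs : ∀ x, ∑ y, Q x y * Real.log (Phat x y) ≤ ∑ y, Q x y * Real.log (Q x y) := by
    intro x
    have h1 : ∑ y, (Q x y * Real.log (Phat x y) - Q x y * Real.log (Q x y))
        ≤ ∑ y, (Phat x y - Q x y) := by
      refine Finset.sum_le_sum fun y _ => ?_
      rcases eq_or_lt_of_le (hQ_nonneg x y) with h0 | hpos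
      · rw [← h0]; simp [le_of_lt (hPpos x y)]
      · have hlog : Real.log (Phat x y) - Real.log (Q x y)
            = Real.log (Phat x y / Q x y) :=
          (Real.log_div (ne_of_gt (hPpos x y)) (ne_of_gt hpos)).symm
        have hle : Real.log (Phat x y / Q x y) ≤ Phat x y / Q x y - 1 :=
          Real.log_le_sub_one_of_pos (div_pos (hPpos x y) hpos)
        have : Q x y * Real.log (Phat x y) - Q x y * Real.log (Q x y)
            = Q x y * Real.log (Phat x y / Q x y) := by rw [← hlog]; ring
        rw [this]
        have := mul_le_mul_of_nonneg_left hle (le_of_lt hpos)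
        calc Q x y * Real.log (Phat x y / Q x y)
            ≤ Q x y * (Phat x y / Q x y - 1) := this
          _ = Phat x y - Q x y := by field_simp
      
    have h2 : ∑ y, (Phat x y - Q x y) = 0 := by
      rw [Finset.sum_sub_distrib, hPsum x, hQ_sum x, sub_self]
    have h3 := h1.trans (le_of_eq h2)
    rw [Finset.sum_sub_distrib] at h3
    linarith
  have final : ∑ x, ptest x * ∑ y, Phat x y * Real.log (Phat x y)
      ≤ ∑ x, ptest x * ∑ y, Q x y * Real.log (Q x y) := by
    rw [← hcrossEq]
    exact Finset.sum_le_sum fun x _ =>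
      mul_le_mul_of_nonneg_left (gibbs x) (le_of_lt (htest_pos x))
  have lhs_eq : ∑ x, ptest x * ∑ y, Q x y * (-Real.log (Q x y))
      = -∑ x, ptest x * ∑ y, Q x y * Real.log (Q x y) := by
    simp [mul_neg, Finset.sum_neg_distrib]
  have rhs_eq : ∑ x, ptest x * ∑ y, Phat x y * (-Real.log (Phat x y))
      = -∑ x, ptest x * ∑ y, Phat x y * Real.log (Phat x y) := by
    simp [mul_neg, Finset.sum_neg_distrib]
  rw [lhs_eq, rhs_eq]
  linarith
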